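/- Under the assumptions of the existence theorem for f, the unique solution f satisfies ∂f/∂t(y,t) ≥ 0 for all (y,t) ∈ [0,1]×[0,∞), i.e., the characteristic curves started from the initial line are nondecreasing in time. -/

import Mathlib

open Set MeasureTheory

theorem stmt_6 {W : Type*} [MeasurableSpace W] (lam : Measure W)
    [IsProbabilityMeasure lam]
    (w : W → ℝ → ℝ → ℝ)
    (hw_nonneg : ∀ i y t, 0 ≤ w i y t)
    (hw_cont : ∀ i, Continuous fun p : ℝ × ℝ => w i p.1 p.2)
    (ρ ρy : W → ℝ → ℝ)
    (hρ_deriv : ∀ i y, HasDerivAt (ρ i) (ρy i y) y)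
    (hρy_cont : ∀ i, Continuous (ρy i))
    (hρy_nonpos : ∀ i, ∀ y ∈ Icc (0:ℝ) 1, ρy i y ≤ 0)
    (hρ0 : ∀ i, ρ i 0 = 1) (hρ1 : ∀ i, ρ i 1 = 0)
    (hmass : ∀ y ∈ Icc (0:ℝ) 1, ∫ i, ρ i y ∂lam = 1 - y)
    (f ft : ℝ → ℝ → ℝ)
    (hf_cont : ContinuousOn (fun p : ℝ × ℝ => f p.1 p.2) (Icc 0 1 ×ˢ Ici 0))
    (hf_range : ∀ y ∈ Icc (0:ℝ) 1, ∀ t ∈ Ici (0:ℝ), f y t ∈ Icc (0:ℝ) 1)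
    (hft : ∀ y ∈ Icc (0:ℝ) 1, ∀ t ∈ Ici (0:ℝ),
      HasDerivAt (fun t => f y t) (ft y t) t)
    (hf_eq : ∀ y ∈ Icc (0:ℝ) 1, ∀ t ∈ Ici (0:ℝ),
      f y t = 1 + ∫ i, (∫ z in y..(1:ℝ), ρy i z *
        Real.exp (-∫ s in (0:ℝ)..t, w i (f z s) s)) ∂lam) :
    ∀ y ∈ Icc (0:ℝ) 1, ∀ t ∈ Ici (0:ℝ), 0 ≤ ft y t := by
  -- clamp function onto [0,1]
  set c : ℝ → ℝ := fun z => max 0 (min 1 z) with hc_def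
  have hc_cont : Continuous c := by fun_prop
  have hc_mem : ∀ z, c z ∈ Icc (0:ℝ) 1 :=
    fun z => ⟨le_max_left _ _, max_le (by norm_num) (min_le_left _ _)⟩
  have hc_eq : ∀ z ∈ Icc (0:ℝ) 1, c z = z := by
    intro z hz
    simp only [hc_def]
    rw [min_eq_right hz.2, max_eq_right hz.1]
  -- continuous extension of f to all of ℝ²
  set F : ℝ → ℝ → ℝ := fun z s => f (c z) (max 0 s) with hF_def
  have hF_cont : Continuous fun p : ℝ × ℝ => F p.1 p.2 := by
    have : Continuous fun p : ℝ × ℝ => ((c p.1, max 0 p.2) : ℝ × ℝ) := by fun_prop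
    exact hf_cont.comp_continuous this (fun p => ⟨hc_mem _, Set.mem_Ici.2 (le_max_left _ _)⟩)
  have hF_eq : ∀ z ∈ Icc (0:ℝ) 1, ∀ s, 0 ≤ s → F z s = f z s := by
    intro z hz s hs
    simp only [hF_def]
    rw [hc_eq z hz, max_eq_right hs]
  intro y hy t ht
  have hy1 : y ≤ 1 := hy.2
  -- the time integral
  set B : W → ℝ → ℝ → ℝ := fun i z s => ∫ u in (0:ℝ)..s, w i (F z u) u with hB_def
  have hBi_cont : ∀ i, Continuous fun p : ℝ × ℝ => w i (F p.1 p.2) p.2 := by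
    intro i
    exact (hw_cont i).comp (hF_cont.prodMk continuous_snd)
  have hB_cont : ∀ i s, Continuous fun z => B i z s := by
    intro i s
    exact intervalIntegral.continuous_parametric_intervalIntegral_of_continuous'
      (μ := volume) (f := fun z u => w i (F z u) u) (hBi_cont i) 0 s
  have hB_intble : ∀ i z a b, IntervalIntegrable (fun u => w i (F z u) u) volume a b := by
    intro i z a b
    exact (((hw_cont i).comp ((hF_cont.comp
      (Continuous.prodMk (continuous_const : Continuous fun _ : ℝ => z) continuous_id)).prodMk
      continuous_id))).intervalIntegrable a b
  have hB_mono : ∀ i z s₁ s₂, s₁ ≤ s₂ → B i z s₁ ≤ B i z s₂ := by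
    intro i z s₁ s₂ h12
    have hsplit := intervalIntegral.integral_add_adjacent_intervals
      (hB_intble i z 0 s₁) (hB_intble i z s₁ s₂)
    have hpos : 0 ≤ ∫ u in s₁..s₂, w i (F z u) u :=
      intervalIntegral.integral_nonneg h12 (fun u _ => hw_nonneg _ _ _)
    simp only [hB_def]
    linarith [hsplit]
  -- the inner space integral
  set g : W → ℝ → ℝ := fun i s => ∫ z in y..(1:ℝ), ρy i z * Real.exp (-(B i z s))
    with hg_def
  have hg_intble : ∀ i s,
      IntervalIntegrable (fun z => ρy i z * Real.exp (-(B i z s))) volume y 1 := by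
    intro i s
    exact ((hρy_cont i).mul (Real.continuous_exp.comp (hB_cont i s).neg)).intervalIntegrable y 1
  have hg_mono : ∀ i s₁ s₂, s₁ ≤ s₂ → g i s₁ ≤ g i s₂ := by
    intro i s₁ s₂ h12
    refine intervalIntegral.integral_mono_on hy1 (hg_intble i s₁) (hg_intble i s₂) ?_
    intro z hz
    have hz01 : z ∈ Icc (0:ℝ) 1 := ⟨hy.1.trans hz.1, hz.2⟩
    have hB := hB_mono i z s₁ s₂ h12
    have hexp : Real.exp (-(B i z s₂)) ≤ Real.exp (-(B i z s₁)) :=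
      Real.exp_le_exp.2 (neg_le_neg hB)
    exact mul_le_mul_of_nonpos_left hexp (hρy_nonpos i z hz01)
  have hg_nonpos : ∀ i s, g i s ≤ 0 := by
    intro i s
    have : (∫ z in y..(1:ℝ), ρy i z * Real.exp (-(B i z s))) ≤
        ∫ z in y..(1:ℝ), (0:ℝ) := by
      refine intervalIntegral.integral_mono_on hy1 (hg_intble i s)
        (intervalIntegrable_const) ?_
      intro z hz
      have hz01 : z ∈ Icc (0:ℝ) 1 := ⟨hy.1.trans hz.1, hz.2⟩
      exact mul_nonpos_of_nonpos_of_nonneg (hρy_nonpos i z hz01) (Real.exp_pos _).le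
    simpa using this
  -- rewrite the fixed-point equation through g
  have hfg : ∀ s, 0 ≤ s → f y s = 1 + ∫ i, g i s ∂lam := by
    intro s hs
    rw [hf_eq y hy s hs]
    congr 1
    congr 1
    funext i
    refine intervalIntegral.integral_congr ?_
    intro z hz
    rw [uIcc_of_le hy1] at hz
    have hz01 : z ∈ Icc (0:ℝ) 1 := ⟨hy.1.trans hz.1, hz.2⟩
    have hBeq : (∫ u in (0:ℝ)..s, w i (f z u) u) = B i z s := by
      refine intervalIntegral.integral_congr ?_
      intro u hu
      rw [uIcc_of_le hs] at hu
      show w i (f z u) u = w i (F z u) u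
      rw [hF_eq z hz01 u hu.1]
    show ρy i z * Real.exp (-∫ u in (0:ℝ)..s, w i (f z u) u) = ρy i z * Real.exp (-(B i z s))
    rw [hBeq]
  -- continuity of f y on [0,∞)
  have hfy_cont : ContinuousOn (fun s => f y s) (Ici (0:ℝ)) := by
    have h1 : ContinuousOn (fun s : ℝ => ((y, s) : ℝ × ℝ)) (Ici (0:ℝ)) :=
      (Continuous.prodMk continuous_const continuous_id).continuousOn
    exact hf_cont.comp h1 (fun s hs => ⟨hy, hs⟩)
  -- monotonicity of f y on [0,∞)
  have hmono : ∀ s₁ s₂, 0 ≤ s₁ → s₁ ≤ s₂ → f y s₁ ≤ f y s₂ := by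
    intro s₁ s₂ h0 h12
    have h0' : (0:ℝ) ≤ s₂ := h0.trans h12
    rw [hfg s₁ h0, hfg s₂ h0']
    refine add_le_add_right ?_ 1
    by_cases H2 : Integrable (fun i => g i s₂) lam
    · by_cases H1 : Integrable (fun i => g i s₁) lam
      · exact integral_mono H1 H2 (fun i => hg_mono i s₁ s₂ h12)
      · -- both sides degenerate: show ∫ g s₂ = 0
        rw [integral_undef H1]
        by_contra hlt
        push_neg at hlt
        have hG2 : (∫ i, g i s₂ ∂lam) < 0 := hlt
        have hfy1 : f y s₁ = 1 := by
          rw [hfg s₁ h0, integral_undef H1, add_zero]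
        have hfy2 : f y s₂ = 1 + ∫ i, g i s₂ ∂lam := hfg s₂ h0'
        set G₂ := ∫ i, g i s₂ ∂lam with hG₂def
        have hcont' : ContinuousOn (fun s => f y s) (Icc s₁ s₂) :=
          hfy_cont.mono (fun u hu => h0.trans hu.1)
        have hmem : (1 + G₂ / 2) ∈ Icc (f y s₂) (f y s₁) := by
          rw [hfy1, hfy2]
          constructor <;> [linarith; linarith]
        obtain ⟨s₀, hs₀, hfs₀⟩ := intermediate_value_Icc' h12 hcont' hmem
        have h0s₀ : (0:ℝ) ≤ s₀ := h0.trans hs₀.1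
        have hfs₀' : f y s₀ = 1 + G₂ / 2 := hfs₀
        have hGs₀ : (∫ i, g i s₀ ∂lam) = G₂ / 2 := by
          have h1 := hfg s₀ h0s₀
          linarith
        by_cases H0 : Integrable (fun i => g i s₀) lam
        · have hle : (∫ i, g i s₀ ∂lam) ≤ G₂ :=
            integral_mono H0 H2 (fun i => hg_mono i s₀ s₂ hs₀.2)
          rw [hGs₀] at hle
          linarith
        · rw [integral_undef H0] at hGs₀
          linarith
    · rw [integral_undef H2]
      exact integral_nonpos (fun i => hg_nonpos i s₁)
  -- conclude: derivative of a monotone function is nonnegative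
  have hd := hft y hy t ht
  have hslope := hasDerivAt_iff_tendsto_slope.1 hd
  have hslope' : Filter.Tendsto (slope (fun s => f y s) t) (nhdsWithin t (Ioi t))
      (nhds (ft y t)) :=
    hslope.mono_left (nhdsWithin_mono t (fun u (hu : t < u) => hu.ne'))
  refine ge_of_tendsto hslope' ?_
  filter_upwards [self_mem_nhdsWithin] with u hu
  have htu : t < u := hu
  have hle : f y t ≤ f y u := hmono t u ht htu.le
  rw [slope_def_field]
  exact div_nonneg (sub_nonneg.2 hle) (sub_nonneg.2 htu.le)
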